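/- Let q = n/(n−α) for α ∈ [0,n), and let Ω be homogeneous of degree zero satisfying the L^q-Dini condition (∫₀¹ ω_q(t)/t dt < ∞ where ω_q(t) = sup_{|h|≤t} (∫_{S^{n−1}} |Ω(x'+h)−Ω(x')|^q dσ(x'))^{1/q}). Then for every ρ > 0 and y ∈ ℝⁿ, ∫_{|x|>ρ} |Ω(x−y)−Ω(x)|^q / |x|ⁿ dx ≤ ∫₀^{|y|/ρ} ω_q(s)^q / s ds; consequently sup_{|y|≤δ} of the left side tends to 0 as δ → 0⁺. -/

import Mathlib

open MeasureTheory Metric Set Filter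
open scoped ENNReal Topology

/-- The `L^q` integral continuity modulus of `Ω`:
`ω_q(t) = sup_{|h| ≤ t} (∫_{S^{n-1}} |Ω(x'+h) - Ω(x')|^q dσ(x'))^{1/q}`. -/
noncomputable def omegaModQ (n : ℕ) (q : ℝ) (Ω : EuclideanSpace ℝ (Fin n) → ℝ) (t : ℝ) : ℝ≥0∞ :=
  ⨆ (h : EuclideanSpace ℝ (Fin n)) (_ : ‖h‖ ≤ t),
    (∫⁻ x' : sphere (0:EuclideanSpace ℝ (Fin n)) 1,
        ENNReal.ofReal
          (|Ω ((x' : EuclideanSpace ℝ (Fin n)) + h) - Ω (x' : EuclideanSpace ℝ (Fin n))| ^ q)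
        ∂(volume : Measure (EuclideanSpace ℝ (Fin n))).toSphere) ^ (1 / q)

private lemma omegaModQ_mono (n : ℕ) (q : ℝ) (Ω : EuclideanSpace ℝ (Fin n) → ℝ) :
    Monotone (omegaModQ n q Ω) := by
  intro a b hab
  exact iSup_mono fun h => iSup_le fun hh => le_iSup_of_le (hh.trans hab) le_rfl

private lemma sphere_integral_le {n : ℕ} {q : ℝ} (hq : 0 < q)
    {Ω : EuclideanSpace ℝ (Fin n) → ℝ} (h : EuclideanSpace ℝ (Fin n)) {t : ℝ} (ht : ‖h‖ ≤ t) :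
    (∫⁻ x' : sphere (0:EuclideanSpace ℝ (Fin n)) 1,
        ENNReal.ofReal
          (|Ω ((x' : EuclideanSpace ℝ (Fin n)) + h) - Ω (x' : EuclideanSpace ℝ (Fin n))| ^ q)
        ∂(volume : Measure (EuclideanSpace ℝ (Fin n))).toSphere)
      ≤ omegaModQ n q Ω t ^ q := by
  set X := (∫⁻ x' : sphere (0:EuclideanSpace ℝ (Fin n)) 1,
      ENNReal.ofReal
        (|Ω ((x' : EuclideanSpace ℝ (Fin n)) + h) - Ω (x' : EuclideanSpace ℝ (Fin n))| ^ q)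
      ∂(volume : Measure (EuclideanSpace ℝ (Fin n))).toSphere) with hX
  have h1 : X ^ (1/q) ≤ omegaModQ n q Ω t := by
    rw [omegaModQ]
    exact le_iSup_of_le h (le_iSup_of_le ht le_rfl)
  calc X = (X ^ (1/q)) ^ q := by
        rw [← ENNReal.rpow_mul, one_div_mul_cancel hq.ne', ENNReal.rpow_one]
    _ ≤ omegaModQ n q Ω t ^ q := ENNReal.rpow_le_rpow h1 hq.le

set_option maxHeartbeats 1000000 in
private lemma part1 {n : ℕ} (hn : 0 < n) {q : ℝ} (hq : 1 ≤ q)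
    (Ω : EuclideanSpace ℝ (Fin n) → ℝ) (hΩm : Measurable Ω)
    (hΩhom : ∀ s : ℝ, 0 < s → ∀ x : EuclideanSpace ℝ (Fin n), Ω (s • x) = Ω x)
    {ρ : ℝ} (hρ : 0 < ρ) (y : EuclideanSpace ℝ (Fin n)) :
    (∫⁻ x in {x : EuclideanSpace ℝ (Fin n) | ρ < ‖x‖},
        ENNReal.ofReal (|Ω (x - y) - Ω x| ^ q) / ENNReal.ofReal (‖x‖ ^ (n:ℝ)))
      ≤ ∫⁻ s in Set.Ioo (0:ℝ) (‖y‖ / ρ),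
          (omegaModQ n q Ω s) ^ q / ENNReal.ofReal s := by
  classical
  have hq0 : (0:ℝ) < q := lt_of_lt_of_le one_pos hq
  haveI : Nontrivial (EuclideanSpace ℝ (Fin n)) :=
    Module.nontrivial_of_finrank_pos (R := ℝ) (by rw [finrank_euclideanSpace_fin]; exact hn)
  rcases eq_or_ne y 0 with rfl | hy
  · refine le_trans (le_of_eq ?_) zero_le
    simp only [sub_zero, sub_self, abs_zero, Real.zero_rpow hq0.ne', ENNReal.ofReal_zero,
      ENNReal.zero_div, lintegral_zero]
  have hy' : (0:ℝ) < ‖y‖ := norm_pos_iff.2 hy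
  set ω := omegaModQ n q Ω with hωdef
  set μ := (volume : Measure (EuclideanSpace ℝ (Fin n))) with hμ
  have hd : Module.finrank ℝ (EuclideanSpace ℝ (Fin n)) = n := finrank_euclideanSpace_fin
  set S : Set (EuclideanSpace ℝ (Fin n)) := {x | ρ < ‖x‖} with hS
  have hSm : MeasurableSet S := measurableSet_lt measurable_const measurable_norm
  set g : EuclideanSpace ℝ (Fin n) → ℝ≥0∞ :=
    fun x => ENNReal.ofReal (|Ω (x - y) - Ω x| ^ q) / ENNReal.ofReal (‖x‖ ^ (n:ℝ)) with hg
  have hgm : Measurable g := by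
    refine Measurable.div (Measurable.ennreal_ofReal ?_) (Measurable.ennreal_ofReal ?_)
    · exact (Real.continuous_rpow_const hq0.le).measurable.comp
        ((hΩm.comp (measurable_id.sub measurable_const)).sub hΩm).abs
    · exact ((Real.continuous_rpow_const (Nat.cast_nonneg n)).comp continuous_norm).measurable
  have hGm : Measurable (S.indicator g) := hgm.indicator hSm
  set ν := μ.toSphere.prod
      (Measure.volumeIoiPow (Module.finrank ℝ (EuclideanSpace ℝ (Fin n)) - 1)) with hν
  set F : sphere (0:EuclideanSpace ℝ (Fin n)) 1 × Ioi (0:ℝ) → ℝ≥0∞ :=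
    fun p => S.indicator g
      (((homeomorphUnitSphereProd (EuclideanSpace ℝ (Fin n))).symm p :
          ({0}ᶜ : Set (EuclideanSpace ℝ (Fin n)))) : EuclideanSpace ℝ (Fin n)) with hF
  have hFm : Measurable F :=
    hGm.comp (measurable_subtype_coe.comp (Homeomorph.measurable _))
  have stepA : ∫⁻ x in S, g x ∂μ = ∫⁻ p, F p ∂ν := by
    rw [← lintegral_indicator hSm,
      ← restrict_compl_singleton (μ := μ) (0 : EuclideanSpace ℝ (Fin n)),
      ← lintegral_subtype_comap (measurableSet_singleton (0:EuclideanSpace ℝ (Fin n))).compl,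
      hν, ← μ.measurePreserving_homeomorphUnitSphereProd.lintegral_comp_emb
        (Homeomorph.measurableEmbedding _) F]
    refine lintegral_congr fun x => ?_
    simp only [hF, Homeomorph.symm_apply_apply]
  set Ψ0 : ℝ → ℝ≥0∞ := fun t => ω (‖y‖ / t) ^ q * (ENNReal.ofReal (t ^ (n:ℝ)))⁻¹ with hΨ0
  have inner : ∀ r : Ioi (0:ℝ), (∫⁻ u, F (u, r) ∂μ.toSphere) ≤ (Ioi ρ).indicator Ψ0 r.1 := by
    rintro ⟨r, hr⟩
    have hr0 : (0:ℝ) < r := hr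
    have hFr : ∀ u : sphere (0:EuclideanSpace ℝ (Fin n)) 1,
        F (u, ⟨r, hr⟩) = S.indicator g (r • (u : EuclideanSpace ℝ (Fin n))) := by
      intro u
      simp only [hF, homeomorphUnitSphereProd_symm_apply_coe]
    have hnu : ∀ u : sphere (0:EuclideanSpace ℝ (Fin n)) 1,
        ‖r • (u : EuclideanSpace ℝ (Fin n))‖ = r := by
      intro u
      have h1 : ‖(u : EuclideanSpace ℝ (Fin n))‖ = 1 := by
        have := u.2
        rwa [mem_sphere_zero_iff_norm] at this
      rw [norm_smul, h1, Real.norm_eq_abs, abs_of_pos hr0, mul_one]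
    have hcoe : ((⟨r, hr⟩ : Ioi (0:ℝ)) : ℝ) = r := rfl
    rw [hcoe]
    by_cases hrρ : ρ < r
    · rw [indicator_of_mem (mem_Ioi.mpr hrρ) Ψ0]
      have hinv : (ENNReal.ofReal (r ^ (n:ℝ)))⁻¹ ≠ ⊤ :=
        ENNReal.inv_ne_top.2 (ENNReal.ofReal_pos.2 (Real.rpow_pos_of_pos hr0 _)).ne'
      have hGr : ∀ u : sphere (0:EuclideanSpace ℝ (Fin n)) 1,
          F (u, ⟨r, hr⟩) =
            ENNReal.ofReal
                (|Ω ((u : EuclideanSpace ℝ (Fin n)) + (-(r⁻¹ • y)))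
                    - Ω (u : EuclideanSpace ℝ (Fin n))| ^ q)
              * (ENNReal.ofReal (r ^ (n:ℝ)))⁻¹ := by
        intro u
        have hmem : r • (u : EuclideanSpace ℝ (Fin n)) ∈ S := by
          simp only [hS, mem_setOf_eq, hnu u]; exact hrρ
        have e1 : Ω (r • (u : EuclideanSpace ℝ (Fin n))) = Ω u := hΩhom r hr0 u
        have e2 : Ω (r • (u : EuclideanSpace ℝ (Fin n)) - y)
            = Ω ((u : EuclideanSpace ℝ (Fin n)) + (-(r⁻¹ • y))) := by
          rw [← hΩhom r hr0 ((u : EuclideanSpace ℝ (Fin n)) + (-(r⁻¹ • y)))]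
          congr 1
          rw [smul_add, smul_neg, smul_smul, mul_inv_cancel₀ hr0.ne', one_smul, sub_eq_add_neg]
        rw [hFr u, indicator_of_mem hmem, hg]
        simp only
        rw [e2, e1, hnu u, div_eq_mul_inv]
      calc (∫⁻ u, F (u, ⟨r, hr⟩) ∂μ.toSphere)
          = (∫⁻ u : sphere (0:EuclideanSpace ℝ (Fin n)) 1,
              ENNReal.ofReal
                (|Ω ((u : EuclideanSpace ℝ (Fin n)) + (-(r⁻¹ • y)))
                    - Ω (u : EuclideanSpace ℝ (Fin n))| ^ q) ∂μ.toSphere)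
              * (ENNReal.ofReal (r ^ (n:ℝ)))⁻¹ := by
            rw [← lintegral_mul_const' _ _ hinv]
            exact lintegral_congr hGr
        _ ≤ Ψ0 r := by
            rw [hΨ0]
            refine mul_le_mul_left ?_ _
            refine sphere_integral_le hq0 _ (le_of_eq ?_)
            rw [norm_neg, norm_smul, norm_inv, Real.norm_eq_abs, abs_of_pos hr0,
              inv_mul_eq_div]
    · rw [indicator_of_notMem (by simpa using hrρ : r ∉ Ioi ρ) Ψ0]
      have hz : ∀ u : sphere (0:EuclideanSpace ℝ (Fin n)) 1, F (u, ⟨r, hr⟩) = 0 := by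
        intro u
        rw [hFr u, indicator_of_notMem]
        simp only [hS, mem_setOf_eq, hnu u]
        exact hrρ
      rw [lintegral_congr hz]
      simp
  have stepB : ∫⁻ p, F p ∂ν
      = ∫⁻ r : Ioi (0:ℝ), ∫⁻ u, F (u, r) ∂μ.toSphere
          ∂(Measure.volumeIoiPow (Module.finrank ℝ (EuclideanSpace ℝ (Fin n)) - 1)) := by
    rw [hν]
    exact lintegral_prod_symm' F hFm
  have stepC : ∫⁻ r : Ioi (0:ℝ), ∫⁻ u, F (u, r) ∂μ.toSphere
          ∂(Measure.volumeIoiPow (Module.finrank ℝ (EuclideanSpace ℝ (Fin n)) - 1))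
      ≤ ∫⁻ r : Ioi (0:ℝ), (Ioi ρ).indicator Ψ0 r.1
          ∂(Measure.volumeIoiPow (Module.finrank ℝ (EuclideanSpace ℝ (Fin n)) - 1)) :=
    lintegral_mono fun r => inner r
  have stepD : ∫⁻ r : Ioi (0:ℝ), (Ioi ρ).indicator Ψ0 r.1
          ∂(Measure.volumeIoiPow (Module.finrank ℝ (EuclideanSpace ℝ (Fin n)) - 1))
      = ∫⁻ t in Ioi ρ, ENNReal.ofReal (t ^ (n - 1 : ℕ)) * Ψ0 t := by
    rw [hd]
    have e1 : ∫⁻ r : Ioi (0:ℝ), (Ioi ρ).indicator Ψ0 r.1 ∂(Measure.volumeIoiPow (n - 1))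
        = ∫⁻ r : Ioi (0:ℝ), ENNReal.ofReal (r.1 ^ (n - 1 : ℕ)) * (Ioi ρ).indicator Ψ0 r.1
            ∂(Measure.comap Subtype.val volume) := by
      rw [Measure.volumeIoiPow, lintegral_withDensity_eq_lintegral_mul_non_measurable _
        ((measurable_subtype_coe.pow_const _).ennreal_ofReal)
        (Eventually.of_forall fun r => ENNReal.ofReal_lt_top)]
      rfl
    have e2 : ∫⁻ r : Ioi (0:ℝ), ENNReal.ofReal (r.1 ^ (n - 1 : ℕ)) * (Ioi ρ).indicator Ψ0 r.1
            ∂(Measure.comap Subtype.val volume)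
        = ∫⁻ t in Ioi (0:ℝ), ENNReal.ofReal (t ^ (n - 1 : ℕ)) * (Ioi ρ).indicator Ψ0 t :=
      lintegral_subtype_comap measurableSet_Ioi
        (fun t => ENNReal.ofReal (t ^ (n - 1 : ℕ)) * (Ioi ρ).indicator Ψ0 t)
    have hpt : ∀ t : ℝ, ENNReal.ofReal (t ^ (n - 1 : ℕ)) * (Ioi ρ).indicator Ψ0 t
        = (Ioi ρ).indicator (fun t => ENNReal.ofReal (t ^ (n - 1 : ℕ)) * Ψ0 t) t := by
      intro t
      by_cases ht : t ∈ Ioi ρ <;> simp [ht]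
    rw [e1, e2]
    simp only [hpt]
    rw [lintegral_indicator measurableSet_Ioi, Measure.restrict_restrict measurableSet_Ioi,
      inter_eq_left.2 (Ioi_subset_Ioi hρ.le)]
  have ptE : ∀ t ∈ Ioi ρ, ENNReal.ofReal (t ^ (n - 1 : ℕ)) * Ψ0 t
      = ω (‖y‖ / t) ^ q * (ENNReal.ofReal t)⁻¹ := by
    intro t ht
    have ht0 : (0:ℝ) < t := hρ.trans ht
    have hpow : t ^ (n:ℝ) = t ^ (n - 1 : ℕ) * t := by
      rw [Real.rpow_natCast, ← pow_succ, Nat.sub_add_cancel hn]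
    have ha0 : ENNReal.ofReal (t ^ (n - 1 : ℕ)) ≠ 0 := (ENNReal.ofReal_pos.2 (pow_pos ht0 _)).ne'
    have hat : ENNReal.ofReal (t ^ (n - 1 : ℕ)) ≠ ⊤ := ENNReal.ofReal_ne_top
    rw [hΨ0]
    simp only
    rw [hpow, ENNReal.ofReal_mul (pow_pos ht0 _).le,
      ENNReal.mul_inv (Or.inl ha0) (Or.inl hat)]
    calc ENNReal.ofReal (t ^ (n - 1 : ℕ)) * (ω (‖y‖ / t) ^ q
            * ((ENNReal.ofReal (t ^ (n - 1 : ℕ)))⁻¹ * (ENNReal.ofReal t)⁻¹))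
        = ω (‖y‖ / t) ^ q * (ENNReal.ofReal (t ^ (n - 1 : ℕ))
            * (ENNReal.ofReal (t ^ (n - 1 : ℕ)))⁻¹) * (ENNReal.ofReal t)⁻¹ := by ring
      _ = ω (‖y‖ / t) ^ q * (ENNReal.ofReal t)⁻¹ := by
          rw [ENNReal.mul_inv_cancel ha0 hat, mul_one]
  have hderiv : ∀ t ∈ Ioi ρ, HasDerivWithinAt (fun t : ℝ => ‖y‖ / t) (-(‖y‖ / t ^ 2)) (Ioi ρ) t := by
    intro t ht
    have ht0 : (0:ℝ) < t := hρ.trans ht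
    have h1 : HasDerivAt (fun t : ℝ => ‖y‖ / t) (‖y‖ * (-(t ^ 2)⁻¹)) t := by
      simpa [div_eq_mul_inv] using (hasDerivAt_inv ht0.ne').const_mul ‖y‖
    have h2 : ‖y‖ * (-(t ^ 2)⁻¹) = -(‖y‖ / t ^ 2) := by ring
    exact (h2 ▸ h1).hasDerivWithinAt
  have hinj : InjOn (fun t : ℝ => ‖y‖ / t) (Ioi ρ) := by
    intro a ha b hb hab
    have ha0 : (0:ℝ) < a := hρ.trans ha
    have hb0 : (0:ℝ) < b := hρ.trans hb
    simp only at hab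
    rw [div_eq_div_iff ha0.ne' hb0.ne'] at hab
    exact (mul_left_cancel₀ hy'.ne' hab).symm
  have himg : (fun t : ℝ => ‖y‖ / t) '' Ioi ρ = Ioo 0 (‖y‖ / ρ) := by
    ext s
    simp only [mem_image, mem_Ioi, mem_Ioo]
    constructor
    · rintro ⟨t, ht, rfl⟩
      have ht0 : (0:ℝ) < t := hρ.trans ht
      exact ⟨div_pos hy' ht0, div_lt_div_of_pos_left hy' hρ ht⟩
    · rintro ⟨hs0, hs⟩
      refine ⟨‖y‖ / s, ?_, ?_⟩
      · rw [lt_div_iff₀ hs0]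
        have h3 := (lt_div_iff₀ hρ).1 hs
        nlinarith
      · field_simp
  have stepF := lintegral_image_eq_lintegral_abs_det_fderiv_mul volume measurableSet_Ioi
      (fun t ht => (hderiv t ht).hasFDerivWithinAt) hinj
      (fun s => ω s ^ q / ENNReal.ofReal s)
  rw [himg] at stepF
  simp only [ContinuousLinearMap.det_toSpanSingleton] at stepF
  have ptG : ∀ t ∈ Ioi ρ,
      ENNReal.ofReal |(-(‖y‖ / t ^ 2))| * (ω (‖y‖ / t) ^ q / ENNReal.ofReal (‖y‖ / t))
        = ω (‖y‖ / t) ^ q * (ENNReal.ofReal t)⁻¹ := by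
    intro t ht
    have ht0 : (0:ℝ) < t := hρ.trans ht
    have hyt : (0:ℝ) < ‖y‖ / t := div_pos hy' ht0
    have habs : |(-(‖y‖ / t ^ 2))| = ‖y‖ / t ^ 2 := by
      rw [abs_neg, abs_of_nonneg (div_nonneg (norm_nonneg y) (sq_nonneg t))]
    have hsplit : ‖y‖ / t ^ 2 = (‖y‖ / t) * t⁻¹ := by
      rw [sq]
      field_simp
    calc ENNReal.ofReal |(-(‖y‖ / t ^ 2))| * (ω (‖y‖ / t) ^ q / ENNReal.ofReal (‖y‖ / t))
        = ENNReal.ofReal (‖y‖ / t) * ENNReal.ofReal t⁻¹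
            * (ω (‖y‖ / t) ^ q * (ENNReal.ofReal (‖y‖ / t))⁻¹) := by
          rw [habs, hsplit, ENNReal.ofReal_mul hyt.le]
          congr 1
      _ = ω (‖y‖ / t) ^ q * (ENNReal.ofReal (‖y‖ / t) * (ENNReal.ofReal (‖y‖ / t))⁻¹)
            * ENNReal.ofReal t⁻¹ := by ring
      _ = ω (‖y‖ / t) ^ q * (ENNReal.ofReal t)⁻¹ := by
          rw [ENNReal.mul_inv_cancel (ENNReal.ofReal_pos.2 hyt).ne' ENNReal.ofReal_ne_top,
            mul_one, ENNReal.ofReal_inv_of_pos ht0]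
  calc (∫⁻ x in S, g x ∂μ) = ∫⁻ p, F p ∂ν := stepA
    _ = _ := stepB
    _ ≤ _ := stepC
    _ = ∫⁻ t in Ioi ρ, ENNReal.ofReal (t ^ (n - 1 : ℕ)) * Ψ0 t := stepD
    _ = ∫⁻ t in Ioi ρ, ω (‖y‖ / t) ^ q * (ENNReal.ofReal t)⁻¹ :=
        setLIntegral_congr_fun measurableSet_Ioi ptE
    _ = ∫⁻ t in Ioi ρ,
          ENNReal.ofReal |(-(‖y‖ / t ^ 2))| * (ω (‖y‖ / t) ^ q / ENNReal.ofReal (‖y‖ / t)) :=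
        (setLIntegral_congr_fun measurableSet_Ioi ptG).symm
    _ = ∫⁻ s in Ioo (0:ℝ) (‖y‖ / ρ), ω s ^ q / ENNReal.ofReal s := stepF.symm

set_option maxHeartbeats 1000000 in
private lemma part2 {n : ℕ} {q : ℝ} (hq : 1 ≤ q) (Ω : EuclideanSpace ℝ (Fin n) → ℝ)
    (hDini : (∫⁻ s in Set.Ioo (0:ℝ) 1, omegaModQ n q Ω s / ENNReal.ofReal s) < ⊤) :
    Tendsto (fun ε : ℝ => ∫⁻ s in Set.Ioo (0:ℝ) ε, omegaModQ n q Ω s ^ q / ENNReal.ofReal s)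
      (𝓝[>] (0:ℝ)) (𝓝 0) := by
  set ω := omegaModQ n q Ω with hωdef
  have hmono : Monotone ω := omegaModQ_mono n q Ω
  have hq0 : (0:ℝ) < q := lt_of_lt_of_le one_pos hq
  -- ω is finite at 1/2
  have hfin : ω (1/2 : ℝ) ≠ ⊤ := by
    intro htop
    have hge : ∫⁻ s in Ioo (0:ℝ) 1, ω s / ENNReal.ofReal s
        ≥ ∫⁻ s in Ico (1/2:ℝ) 1, ω s / ENNReal.ofReal s :=
      lintegral_mono_set (fun x hx => ⟨by linarith [hx.1], hx.2⟩)
    have heq : ∫⁻ s in Ico (1/2:ℝ) 1, ω s / ENNReal.ofReal s = ⊤ := by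
      have hpt : ∀ s ∈ Ico (1/2:ℝ) 1, ω s / ENNReal.ofReal s = ⊤ := by
        intro s hs
        have h1 : ω s = ⊤ := top_le_iff.1 (htop ▸ hmono hs.1)
        rw [h1, ENNReal.top_div_of_ne_top ENNReal.ofReal_ne_top]
      rw [setLIntegral_congr_fun measurableSet_Ico hpt, lintegral_const,
        Measure.restrict_apply_univ, Real.volume_Ico]
      rw [ENNReal.top_mul]
      simp only [ne_eq, ENNReal.ofReal_eq_zero, not_le]
      norm_num
    exact lt_irrefl ⊤ (lt_of_le_of_lt (heq ▸ hge) hDini)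
  set C := ω (1/2 : ℝ) ^ (q - 1) with hC
  have hCne : C ≠ ⊤ := ENNReal.rpow_ne_top_of_nonneg (by linarith) hfin
  set ν := (volume : Measure ℝ).withDensity (fun s => ω s / ENNReal.ofReal s) with hν
  have hfmeas : Measurable fun s => ω s / ENNReal.ofReal s :=
    (hmono.measurable).div measurable_id.ennreal_ofReal
  have hν1 : ν (Ioo (0:ℝ) 1) ≠ ⊤ := by
    rw [hν, withDensity_apply _ measurableSet_Ioo]
    exact hDini.ne
  have hcomp : ∀ ε : ℝ, ε ≤ 1/2 →
      (∫⁻ s in Ioo (0:ℝ) ε, ω s ^ q / ENNReal.ofReal s) ≤ C * ν (Ioo (0:ℝ) ε) := by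
    intro ε hε
    have hpt : ∀ᵐ s ∂(volume : Measure ℝ).restrict (Ioo (0:ℝ) ε),
        ω s ^ q / ENNReal.ofReal s ≤ C * (ω s / ENNReal.ofReal s) := by
      filter_upwards [ae_restrict_mem measurableSet_Ioo] with s hs
      have h1 : ω s ^ q = ω s ^ (q - 1) * ω s := by
        nth_rewrite 1 [show q = (q - 1) + 1 by ring]
        rw [ENNReal.rpow_add_of_nonneg _ _ (by linarith) zero_le_one, ENNReal.rpow_one]
      have h2 : ω s ^ (q - 1) ≤ C :=
        ENNReal.rpow_le_rpow (hmono (le_trans hs.2.le hε)) (by linarith)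
      calc ω s ^ q / ENNReal.ofReal s = ω s ^ (q - 1) * (ω s / ENNReal.ofReal s) := by
            rw [h1, div_eq_mul_inv, div_eq_mul_inv, mul_assoc]
        _ ≤ C * (ω s / ENNReal.ofReal s) := mul_le_mul_left h2 _
    calc (∫⁻ s in Ioo (0:ℝ) ε, ω s ^ q / ENNReal.ofReal s)
        ≤ ∫⁻ s in Ioo (0:ℝ) ε, C * (ω s / ENNReal.ofReal s) := lintegral_mono_ae hpt
      _ = C * ∫⁻ s in Ioo (0:ℝ) ε, ω s / ENNReal.ofReal s := lintegral_const_mul' _ _ hCne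
      _ = C * ν (Ioo (0:ℝ) ε) := by rw [hν, withDensity_apply _ measurableSet_Ioo]
  have hin : (⋂ k : ℕ, Ioo (0:ℝ) (1/(k+1))) = ∅ := by
    ext x
    simp only [mem_iInter, mem_Ioo, mem_empty_iff_false, iff_false, not_forall]
    by_contra hcon
    push_neg at hcon
    obtain ⟨k, hk⟩ := exists_nat_one_div_lt (hcon 0).1
    exact absurd ((hcon k).2) (not_lt.2 (le_of_lt hk))
  have hT : Tendsto (fun k : ℕ => ν (Ioo (0:ℝ) (1/(k+1)))) atTop (𝓝 0) := by
    have hanti : Antitone fun k : ℕ => Ioo (0:ℝ) (1/(k+1)) := by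
      intro i j hij
      apply Ioo_subset_Ioo le_rfl
      have h1 : ((i:ℝ)+1) ≤ ((j:ℝ)+1) := by
        have := (Nat.cast_le (α := ℝ)).2 hij
        linarith
      exact one_div_le_one_div_of_le (by positivity) h1
    have h1 := tendsto_measure_iInter_atTop (μ := ν)
      (fun k => measurableSet_Ioo.nullMeasurableSet) hanti
      ⟨0, by norm_num; exact hν1⟩
    rw [hin] at h1
    simpa [Function.comp_def] using h1
  rw [ENNReal.tendsto_nhds_zero]
  intro ε' hε'
  have hTC : Tendsto (fun k : ℕ => C * ν (Ioo (0:ℝ) (1/(k+1)))) atTop (𝓝 0) := by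
    have := ENNReal.Tendsto.const_mul (a := C) hT (Or.inr hCne)
    simpa using this
  obtain ⟨k, hk1, hk2⟩ := ((ENNReal.tendsto_nhds_zero.1 hTC ε' hε').and (eventually_ge_atTop 1)).exists
  have hkpos : (0:ℝ) < 1/(k+1) := by positivity
  have hkhalf : (1:ℝ)/(k+1) ≤ 1/2 := by
    apply one_div_le_one_div_of_le (by norm_num)
    have : (1:ℝ) ≤ (k:ℝ) := by exact_mod_cast hk2
    linarith
  filter_upwards [Ioo_mem_nhdsGT_of_mem (⟨le_rfl, hkpos⟩ : (0:ℝ) ∈ Ico (0:ℝ) (1/(k+1)))] with δ hδ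
  calc (∫⁻ s in Ioo (0:ℝ) δ, ω s ^ q / ENNReal.ofReal s)
      ≤ ∫⁻ s in Ioo (0:ℝ) (1/(k+1)), ω s ^ q / ENNReal.ofReal s :=
        lintegral_mono_set (Ioo_subset_Ioo le_rfl hδ.2.le)
    _ ≤ C * ν (Ioo (0:ℝ) (1/(k+1))) := hcomp _ hkhalf
    _ ≤ ε' := hk1

set_option maxHeartbeats 1000000 in
/-- With `q = n/(n-α)` and `Ω` homogeneous of degree zero satisfying the `L^q`-Dini condition:
`∫_{|x|>ρ} |Ω(x-y) - Ω(x)|^q/|x|^n dx ≤ ∫₀^{|y|/ρ} ω_q(s)^q/s ds` for all `ρ > 0`, `y`;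
consequently `sup_{|y| ≤ δ}` of the left-hand side tends to `0` as `δ → 0⁺`. -/
theorem stmt_14 {n : ℕ} (α : ℝ) (hα0 : 0 ≤ α) (hαn : α < n)
    (Ω : EuclideanSpace ℝ (Fin n) → ℝ) (hΩm : Measurable Ω)
    (hΩhom : ∀ s : ℝ, 0 < s → ∀ x : EuclideanSpace ℝ (Fin n), Ω (s • x) = Ω x)
    (hΩLq : (∫⁻ x' : sphere (0:EuclideanSpace ℝ (Fin n)) 1,
        ENNReal.ofReal (|Ω (x' : EuclideanSpace ℝ (Fin n))| ^ ((n:ℝ) / ((n:ℝ) - α)))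
        ∂(volume : Measure (EuclideanSpace ℝ (Fin n))).toSphere) < ⊤)
    (hDini : (∫⁻ s in Set.Ioo (0:ℝ) 1,
        omegaModQ n ((n:ℝ) / ((n:ℝ) - α)) Ω s / ENNReal.ofReal s) < ⊤) :
    (∀ ρ : ℝ, 0 < ρ → ∀ y : EuclideanSpace ℝ (Fin n),
      (∫⁻ x in {x : EuclideanSpace ℝ (Fin n) | ρ < ‖x‖},
          ENNReal.ofReal (|Ω (x - y) - Ω x| ^ ((n:ℝ) / ((n:ℝ) - α)))
            / ENNReal.ofReal (‖x‖ ^ (n:ℝ)))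
        ≤ ∫⁻ s in Set.Ioo (0:ℝ) (‖y‖ / ρ),
            (omegaModQ n ((n:ℝ) / ((n:ℝ) - α)) Ω s) ^ ((n:ℝ) / ((n:ℝ) - α))
              / ENNReal.ofReal s) ∧
    (∀ ρ : ℝ, 0 < ρ →
      Tendsto (fun δ : ℝ =>
          ⨆ (y : EuclideanSpace ℝ (Fin n)) (_ : ‖y‖ ≤ δ),
            ∫⁻ x in {x : EuclideanSpace ℝ (Fin n) | ρ < ‖x‖},
              ENNReal.ofReal (|Ω (x - y) - Ω x| ^ ((n:ℝ) / ((n:ℝ) - α)))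
                / ENNReal.ofReal (‖x‖ ^ (n:ℝ)))
        (𝓝[>] (0:ℝ)) (𝓝 0)) := by
  have hn : 0 < n := by
    rcases Nat.eq_zero_or_pos n with h0 | h
    · subst h0
      norm_num at hαn
      linarith
    · exact h
  have hna : (0:ℝ) < (n:ℝ) - α := by
    have : (α:ℝ) < (n:ℝ) := hαn
    linarith
  have hq1 : 1 ≤ (n:ℝ) / ((n:ℝ) - α) := by
    rw [le_div_iff₀ hna]
    linarith
  have key : ∀ ρ : ℝ, 0 < ρ → ∀ y : EuclideanSpace ℝ (Fin n),
      (∫⁻ x in {x : EuclideanSpace ℝ (Fin n) | ρ < ‖x‖},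
          ENNReal.ofReal (|Ω (x - y) - Ω x| ^ ((n:ℝ) / ((n:ℝ) - α)))
            / ENNReal.ofReal (‖x‖ ^ (n:ℝ)))
        ≤ ∫⁻ s in Set.Ioo (0:ℝ) (‖y‖ / ρ),
            (omegaModQ n ((n:ℝ) / ((n:ℝ) - α)) Ω s) ^ ((n:ℝ) / ((n:ℝ) - α))
              / ENNReal.ofReal s :=
    fun ρ hρ y => part1 hn hq1 Ω hΩm hΩhom hρ y
  refine ⟨key, ?_⟩
  intro ρ hρ
  have hB := part2 hq1 Ω hDini
  have hdiv : Tendsto (fun δ : ℝ => δ / ρ) (𝓝[>] (0:ℝ)) (𝓝[>] (0:ℝ)) := by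
    apply tendsto_nhdsWithin_of_tendsto_nhds_of_eventually_within
    · have h1 : Tendsto (fun δ : ℝ => δ / ρ) (𝓝 (0:ℝ)) (𝓝 (0 / ρ)) :=
        (continuous_id.div_const ρ).tendsto 0
      rw [zero_div] at h1
      exact h1.mono_left nhdsWithin_le_nhds
    · exact eventually_nhdsWithin_of_forall (fun x hx => div_pos hx hρ)
  have hBb := hB.comp hdiv
  refine tendsto_of_tendsto_of_tendsto_of_le_of_le tendsto_const_nhds hBb
    (fun δ => zero_le) ?_
  intro δ
  refine iSup₂_le fun y hy => ?_
  refine (key ρ hρ y).trans (lintegral_mono_set (Ioo_subset_Ioo le_rfl ?_))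
  exact (div_le_div_iff_of_pos_right hρ).2 hy
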